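/- arXiv:2404.14706 — 2 statements merged into one kernel-verified Lean document; each statement's English description precedes it below -/
import Mathlib

section
/- Let A ≠ 0, B ≠ 0 and ξc > 0 with B² > 4|A|ξc. Then the two roots r₁ < 0 < r₂ of |A r² + B r| = ξc that are closest to zero (i.e., the root of smallest absolute value on each side of 0) satisfy |r₂ − r₁| ≥ 2ξc/|B|. -/
set_option maxHeartbeats 1000000

lemma sq_cancel {x y : ℝ} (hx : 0 ≤ x) (hy : 0 ≤ y) (h : x^2 = y^2) : x = y := by
  nlinarith [sq_nonneg (x - y), sq_nonneg (x + y)]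

theorem key (A B ξc r₁ r₂ : ℝ) (hA : 0 < A) (hB : 0 < B) (hξ : 0 < ξc)
    (hbranch : B ^ 2 > 4 * A * ξc)
    (hr₁neg : r₁ < 0) (hr₂pos : 0 < r₂)
    (h₁ : |A * r₁ ^ 2 + B * r₁| = ξc)
    (h₂ : |A * r₂ ^ 2 + B * r₂| = ξc)
    (hclosest : ∀ r, r₁ < r → r < r₂ → |A * r ^ 2 + B * r| ≠ ξc) :
    r₂ - r₁ ≥ 2 * ξc / B := by
  set s := Real.sqrt (B^2 - 4*A*ξc) with hsdef
  have hs2 : s^2 = B^2 - 4*A*ξc := Real.sq_sqrt (by nlinarith)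
  have hs0 : 0 ≤ s := Real.sqrt_nonneg _
  have hsB : s < B := by nlinarith
  set t := Real.sqrt (B^2 + 4*A*ξc) with htdef
  have ht2 : t^2 = B^2 + 4*A*ξc := Real.sq_sqrt (by nlinarith)
  have ht0 : 0 ≤ t := Real.sqrt_nonneg _
  -- r₂ satisfies f r₂ = ξc
  have hf2 : A * r₂ ^ 2 + B * r₂ = ξc := by
    rcases (abs_eq (le_of_lt hξ)).mp h₂ with h | h
    · exact h
    · nlinarith
  -- hence 2A r₂ + B = t
  have h2a : 2*A*r₂ + B = t := by
    have hsq : (2*A*r₂ + B)^2 = t^2 := by nlinarith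
    have hpos : 0 < 2*A*r₂ + B := by positivity
    exact sq_cancel hpos.le ht0 hsq
  -- the closest negative root T₁
  have hT1root : A * ((s - B)/(2*A)) ^ 2 + B * ((s - B)/(2*A)) = -ξc := by
    field_simp
    nlinarith [hs2]
  have hT1neg : (s - B)/(2*A) < 0 := div_neg_of_neg_of_pos (by linarith) (by linarith)
  have hr1ge : (s - B)/(2*A) ≤ r₁ := by
    by_contra hcon
    push_neg at hcon
    exact hclosest ((s - B)/(2*A)) hcon (by linarith)
      (by rw [hT1root, abs_neg, abs_of_pos hξ])
  have hr1ge' : s ≤ 2*A*r₁ + B := by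
    have := (div_le_iff₀ (by linarith : (0:ℝ) < 2*A)).mp hr1ge
    linarith
  -- r₁ satisfies f r₁ = -ξc
  have hf1 : A * r₁ ^ 2 + B * r₁ = -ξc := by
    rcases (abs_eq (le_of_lt hξ)).mp h₁ with h | h
    · exfalso
      -- f r₁ = ξc : then 2A r₁ + B = t, but r₁ < 0 forces t < B, contradiction
      have hsq : (2*A*r₁ + B)^2 = t^2 := by nlinarith
      have hpos : 0 ≤ 2*A*r₁ + B := le_trans hs0 hr1ge'
      have : 2*A*r₁ + B = t := sq_cancel hpos ht0 hsq
      nlinarith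
    · exact h
  have h1a : 2*A*r₁ + B = s := by
    have hsq : (2*A*r₁ + B)^2 = s^2 := by nlinarith
    have hpos : 0 ≤ 2*A*r₁ + B := le_trans hs0 hr1ge'
    exact sq_cancel hpos hs0 hsq
  -- final inequality: r₂ - r₁ = (t - s)/(2A) ≥ 2ξc/B
  have hts : s ≤ t := by nlinarith
  have h2B : t + s ≤ 2*B := by nlinarith [sq_nonneg (B - s)]
  have hkey : 4*A*ξc ≤ B*(t - s) := by
    nlinarith [mul_nonneg (sub_nonneg.mpr hts) (by linarith : (0:ℝ) ≤ 2*B - t - s)]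
  rw [ge_iff_le, div_le_iff₀ hB]
  have : 2*A*(r₂ - r₁) = t - s := by linarith
  nlinarith

/-- If `A ≠ 0`, `B ≠ 0`, `ξc > 0` and `B² > 4|A|ξc`, then the two roots
`r₁ < 0 < r₂` of `|A r² + B r| = ξc` closest to zero (no further root of the
equation lies strictly between them) satisfy `|r₂ - r₁| ≥ 2ξc/|B|`. -/
theorem stmt1 (A B ξc r₁ r₂ : ℝ) (hA : A ≠ 0) (hB : B ≠ 0) (hξ : 0 < ξc)
    (hbranch : B ^ 2 > 4 * |A| * ξc)
    (hr₁neg : r₁ < 0) (hr₂pos : 0 < r₂)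
    (h₁ : |A * r₁ ^ 2 + B * r₁| = ξc)
    (h₂ : |A * r₂ ^ 2 + B * r₂| = ξc)
    (hclosest : ∀ r, r₁ < r → r < r₂ → |A * r ^ 2 + B * r| ≠ ξc) :
    |r₂ - r₁| ≥ 2 * ξc / |B| := by
  have habs : |r₂ - r₁| = r₂ - r₁ := abs_of_pos (by linarith)
  rw [habs]
  rcases hA.lt_or_gt with hAneg | hApos <;> rcases hB.lt_or_gt with hBneg | hBpos
  · -- A < 0, B < 0 : use (-A, -B)
    rw [abs_of_neg hBneg]
    have hbr : (-B) ^ 2 > 4 * (-A) * ξc := by rw [abs_of_neg hAneg] at hbranch; nlinarith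
    have e : ∀ r : ℝ, |(-A) * r ^ 2 + (-B) * r| = |A * r ^ 2 + B * r| := by
      intro r; rw [show (-A) * r ^ 2 + (-B) * r = -(A * r ^ 2 + B * r) by ring, abs_neg]
    exact key (-A) (-B) ξc r₁ r₂ (by linarith) (by linarith) hξ hbr hr₁neg hr₂pos
      (by rw [e]; exact h₁) (by rw [e]; exact h₂)
      (fun r hr1 hr2 => by rw [e]; exact hclosest r hr1 hr2)
  · -- A < 0, B > 0 : use (-A, B, -r₂, -r₁)
    rw [abs_of_pos hBpos]
    have hbr : B ^ 2 > 4 * (-A) * ξc := by rw [abs_of_neg hAneg] at hbranch; nlinarith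
    have e : ∀ r : ℝ, |(-A) * (-r) ^ 2 + B * (-r)| = |A * r ^ 2 + B * r| := by
      intro r; rw [show (-A) * (-r) ^ 2 + B * (-r) = -(A * r ^ 2 + B * r) by ring, abs_neg]
    have := key (-A) B ξc (-r₂) (-r₁) (by linarith) hBpos hξ hbr (by linarith) (by linarith)
      (by rw [e]; exact h₂) (by rw [e]; exact h₁)
      (fun r hr1 hr2 => by
        have := hclosest (-r) (by linarith) (by linarith)
        rwa [show A * (-r) ^ 2 + B * (-r) = -((-A) * r ^ 2 + B * r) by ring, abs_neg] at this)
    linarith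
  · -- A > 0, B < 0 : use (A, -B, -r₂, -r₁)
    rw [abs_of_neg hBneg]
    have hbr : (-B) ^ 2 > 4 * A * ξc := by rw [abs_of_pos hApos] at hbranch; nlinarith
    have e : ∀ r : ℝ, |A * (-r) ^ 2 + (-B) * (-r)| = |A * r ^ 2 + B * r| := by
      intro r; rw [show A * (-r) ^ 2 + (-B) * (-r) = A * r ^ 2 + B * r by ring]
    have := key A (-B) ξc (-r₂) (-r₁) hApos (by linarith) hξ hbr (by linarith) (by linarith)
      (by rw [e]; exact h₂) (by rw [e]; exact h₁)
      (fun r hr1 hr2 => by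
        have := hclosest (-r) (by linarith) (by linarith)
        rwa [show A * (-r) ^ 2 + B * (-r) = A * r ^ 2 + (-B) * r by ring] at this)
    linarith
  · -- A > 0, B > 0
    rw [abs_of_pos hBpos]
    have hbr : B ^ 2 > 4 * A * ξc := by rwa [abs_of_pos hApos] at hbranch
    exact key A B ξc r₁ r₂ hApos hBpos hξ hbr hr₁neg hr₂pos h₁ h₂ hclosest
end

section
/- Let h(R) = (N̂₁ᵀ(LR-direction))^m (N̂₂ᵀ(UR-direction)) / (‖LR‖ + ‖UR‖)² viewed as a smooth function of the reflecting-element position R (on the domain where both unit-vector conditions and positivity hold). Then the first-order relative growth rate ξ(ΔR) = (h(R+ΔR) − h(R))/h(R) satisfies ξ(ΔR) = s₁ᵀΔR + o(‖ΔR‖) with gradient vector s₁ = (m/(d₁ cos θ)) N̂₁ + (1/(d₂ cos φ)) N̂₂ − (m/d₁ + 2/(d₁+d₂)) û_L − (1/d₂ + 2/(d₁+d₂)) û_U, where d₁ = ‖LR‖, d₂ = ‖UR‖, û_L, û_U are the unit vectors from L and U toward R, cos θ = N̂₁ᵀû_L, and cos φ = N̂₂ᵀû_U. -/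
open Asymptotics RealInnerProductSpace


variable {E : Type*} [NormedAddCommGroup E] [InnerProductSpace ℝ E]

lemma myHasFDerivAt_norm (x : E) (hx : x ≠ 0) :
    HasFDerivAt (fun y : E => ‖y‖) (innerSL ℝ (‖x‖⁻¹ • x)) x := by
  have hn : ‖x‖ ≠ 0 := norm_ne_zero_iff.mpr hx
  have h1 : HasFDerivAt (fun y : E => ‖y‖ ^ 2) ((2 : ℕ) • (innerSL ℝ x)) x := by
    simpa using (hasFDerivAt_id x).norm_sq
  have hsq : (‖x‖ ^ 2 : ℝ) ≠ 0 := pow_ne_zero _ hn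
  have h2 : HasDerivAt Real.sqrt (1 / (2 * Real.sqrt (‖x‖ ^ 2))) (‖x‖ ^ 2) :=
    Real.hasDerivAt_sqrt hsq
  have h3 := h2.comp_hasFDerivAt x h1
  have heq : (Real.sqrt ∘ fun y : E => ‖y‖ ^ 2) = fun y : E => ‖y‖ := by
    funext y; simp [Real.sqrt_sq (norm_nonneg y)]
  rw [heq] at h3
  refine h3.congr_fderiv (Eq.symm ?_)
  rw [Real.sqrt_sq (norm_nonneg x)]
  ext v
  simp [real_inner_smul_left]
  field_simp

lemma myHasFDerivAt_norm_sub (C x : E) (hx : x ≠ C) :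
    HasFDerivAt (fun y : E => ‖y - C‖) (innerSL ℝ (‖x - C‖⁻¹ • (x - C))) x := by
  have hsub : HasFDerivAt (fun X : E => X - C) (ContinuousLinearMap.id ℝ E) x :=
    (hasFDerivAt_id x).sub_const C
  have := (myHasFDerivAt_norm (x - C) (sub_ne_zero.mpr hx)).comp x hsub
  simpa [Function.comp_def] using this

lemma myHasFDerivAt_inner_sub (C N x : E) :
    HasFDerivAt (fun y : E => (⟪N, y - C⟫ : ℝ)) (innerSL ℝ N) x := by
  have hsub : HasFDerivAt (fun X : E => X - C) (ContinuousLinearMap.id ℝ E) x :=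
    (hasFDerivAt_id x).sub_const C
  have := ((innerSL ℝ N).hasFDerivAt (x := x - C)).comp x hsub
  simpa [Function.comp_def] using this

/-- First-order expansion of the relative growth rate of the Lambertian
channel gain `h(R) = (N̂₁ᵀû_L)^m (N̂₂ᵀû_U)/(d₁+d₂)²`: one has
`(h(R+ΔR) - h(R))/h(R) = s₁ᵀΔR + o(‖ΔR‖)`, with the stated gradient `s₁`. -/
theorem stmt11 (L U N₁ N₂ : EuclideanSpace ℝ (Fin 3)) (m : ℝ) (hm : 0 < m)
    (hN₁ : ‖N₁‖ = 1) (hN₂ : ‖N₂‖ = 1)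
    (R : EuclideanSpace ℝ (Fin 3)) (hRL : R ≠ L) (hRU : R ≠ U)
    (d₁ d₂ : ℝ) (hd₁ : d₁ = ‖R - L‖) (hd₂ : d₂ = ‖R - U‖)
    (uL uU : EuclideanSpace ℝ (Fin 3))
    (huL : uL = d₁⁻¹ • (R - L)) (huU : uU = d₂⁻¹ • (R - U))
    (cθ cφ : ℝ) (hcθ : cθ = ⟪N₁, uL⟫) (hcφ : cφ = ⟪N₂, uU⟫)
    (hcθpos : 0 < cθ) (hcφpos : 0 < cφ)
    (h : EuclideanSpace ℝ (Fin 3) → ℝ)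
    (hh : ∀ X : EuclideanSpace ℝ (Fin 3),
      h X = (⟪N₁, ‖X - L‖⁻¹ • (X - L)⟫ : ℝ) ^ m *
        (⟪N₂, ‖X - U‖⁻¹ • (X - U)⟫ : ℝ) / (‖X - L‖ + ‖X - U‖) ^ 2)
    (s₁ : EuclideanSpace ℝ (Fin 3))
    (hs₁ : s₁ = (m / (d₁ * cθ)) • N₁ + (1 / (d₂ * cφ)) • N₂
        - (m / d₁ + 2 / (d₁ + d₂)) • uL - (1 / d₂ + 2 / (d₁ + d₂)) • uU) :
    (fun ΔR : EuclideanSpace ℝ (Fin 3) =>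
        (h (R + ΔR) - h R) / h R - ⟪s₁, ΔR⟫) =o[nhds 0]
      fun ΔR : EuclideanSpace ℝ (Fin 3) => ‖ΔR‖ := by

  have hd1pos : 0 < d₁ := hd₁ ▸ norm_pos_iff.mpr (sub_ne_zero.mpr hRL)
  have hd2pos : 0 < d₂ := hd₂ ▸ norm_pos_iff.mpr (sub_ne_zero.mpr hRU)
  have hd1ne : d₁ ≠ 0 := hd1pos.ne'
  have hd2ne : d₂ ≠ 0 := hd2pos.ne'
  have hSpos : 0 < d₁ + d₂ := by linarith
  have hSne : d₁ + d₂ ≠ 0 := hSpos.ne'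
  have e1 : ‖R - L‖ = d₁ := hd₁.symm
  have e2 : ‖R - U‖ = d₂ := hd₂.symm
  have hin1 : (⟪N₁, R - L⟫ : ℝ) = d₁ * cθ := by
    rw [hcθ, huL, real_inner_smul_right]; field_simp
  have hin2 : (⟪N₂, R - U⟫ : ℝ) = d₂ * cφ := by
    rw [hcφ, huU, real_inner_smul_right]; field_simp
  have n1 : HasFDerivAt (fun X : EuclideanSpace ℝ (Fin 3) => ‖X - L‖) (innerSL ℝ uL) R := by
    have := myHasFDerivAt_norm_sub L R hRL
    rwa [e1, ← huL] at this
  have n2 : HasFDerivAt (fun X : EuclideanSpace ℝ (Fin 3) => ‖X - U‖) (innerSL ℝ uU) R := by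
    have := myHasFDerivAt_norm_sub U R hRU
    rwa [e2, ← huU] at this
  have g1 := myHasFDerivAt_inner_sub L N₁ R
  have g2 := myHasFDerivAt_inner_sub U N₂ R
  have i1 : HasFDerivAt (fun X : EuclideanSpace ℝ (Fin 3) => ‖X - L‖⁻¹)
      ((-(d₁ ^ 2)⁻¹) • innerSL ℝ uL) R := by
    have hd : HasDerivAt (fun y : ℝ => y⁻¹) (-(d₁ ^ 2)⁻¹) ‖R - L‖ := by
      rw [e1]; exact hasDerivAt_inv hd1ne
    simpa [Function.comp_def] using hd.comp_hasFDerivAt R n1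
  have i2 : HasFDerivAt (fun X : EuclideanSpace ℝ (Fin 3) => ‖X - U‖⁻¹)
      ((-(d₂ ^ 2)⁻¹) • innerSL ℝ uU) R := by
    have hd : HasDerivAt (fun y : ℝ => y⁻¹) (-(d₂ ^ 2)⁻¹) ‖R - U‖ := by
      rw [e2]; exact hasDerivAt_inv hd2ne
    simpa [Function.comp_def] using hd.comp_hasFDerivAt R n2
  have A1 := g1.mul i1
  have A2 := g2.mul i2
  have hA1R : (⟪N₁, R - L⟫ : ℝ) * ‖R - L‖⁻¹ = cθ := by
    rw [hin1, e1]; field_simp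
  have hA2R : (⟪N₂, R - U⟫ : ℝ) * ‖R - U‖⁻¹ = cφ := by
    rw [hin2, e2]; field_simp
  have P1 := A1.rpow_const (p := m) (Or.inl (by simp only [Pi.mul_apply]; rw [hA1R]; exact hcθpos.ne'))
  have num := P1.mul A2
  have nS := n1.add n2
  have Ssq := nS.mul nS
  have hSsqne : (d₁ + d₂) * (d₁ + d₂) ≠ 0 := mul_ne_zero hSne hSne
  have hd : HasDerivAt (fun y : ℝ => y⁻¹) (-(((d₁ + d₂) * (d₁ + d₂)) ^ 2)⁻¹)
      ((‖R - L‖ + ‖R - U‖) * (‖R - L‖ + ‖R - U‖)) := by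
    rw [e1, e2]; exact hasDerivAt_inv hSsqne
  have invS := hd.comp_hasFDerivAt R Ssq
  have total := num.mul invS
  -- identify h with the normal form
  have hfun : h = fun X : EuclideanSpace ℝ (Fin 3) =>
      ((⟪N₁, X - L⟫ : ℝ) * ‖X - L‖⁻¹) ^ m * ((⟪N₂, X - U⟫ : ℝ) * ‖X - U‖⁻¹) *
        (((fun y : ℝ => y⁻¹) ∘ fun X : EuclideanSpace ℝ (Fin 3) =>
          (‖X - L‖ + ‖X - U‖) * (‖X - L‖ + ‖X - U‖)) X) := by
    funext X
    rw [hh X, real_inner_smul_right, real_inner_smul_right]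
    simp only [Function.comp]
    rw [div_eq_mul_inv, sq, mul_comm (⟪N₁, X - L⟫ : ℝ), mul_comm (⟪N₂, X - U⟫ : ℝ)]
  have hhR : h R = cθ ^ m * cφ / (d₁ + d₂) ^ 2 := by
    rw [hh R, e1, e2, ← huL, ← huU, ← hcθ, ← hcφ]
  have hcθne : cθ ≠ 0 := hcθpos.ne'
  have hcφne : cφ ≠ 0 := hcφpos.ne'
  have hder : HasFDerivAt h ((h R) • innerSL ℝ s₁) R := by
    rw [hfun]
    refine total.congr_fderiv (Eq.symm ?_)
    ext v
    simp only [Function.comp, ContinuousLinearMap.smul_apply, ContinuousLinearMap.add_apply,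
      innerSL_apply_apply, smul_eq_mul]
    simp only [Pi.mul_apply, Pi.add_apply, hA1R, hA2R]
    simp only [hs₁, inner_add_left, inner_sub_left, real_inner_smul_left,
      hin1, hin2, e1, e2, hhR]
    rw [Real.rpow_sub_one hcθne]
    field_simp
    ring
  have hRpos : 0 < h R := by
    rw [hhR]
    have := Real.rpow_pos_of_pos hcθpos m
    positivity
  have key := hasFDerivAt_iff_isLittleO_nhds_zero.mp hder
  have goalfun : (fun ΔR : EuclideanSpace ℝ (Fin 3) =>
      (h (R + ΔR) - h R) / h R - ⟪s₁, ΔR⟫)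
      = (h R)⁻¹ • fun ΔR : EuclideanSpace ℝ (Fin 3) =>
        (h (R + ΔR) - h R - ((h R) • innerSL ℝ s₁) ΔR) := by
    funext ΔR
    simp only [Pi.smul_apply, ContinuousLinearMap.smul_apply, innerSL_apply_apply, smul_eq_mul]
    field_simp [hRpos.ne']
  rw [goalfun]
  exact (key.const_smul_left _).norm_right
end
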